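/- For t ≥ 1 and 0 ≤ v, r ≤ 1, we have ((1-v) + v t^(-1))^(-1) ≤ g_{r,v}(t), where g_{r,v}(t) = v(t-1)(r((1+t)/2)^(v-1) + (1-r)) + 1. -/

import Mathlib

theorem harmonic_le_grv (t r v : ℝ) (ht : 1 ≤ t) (hv0 : 0 ≤ v) (hv1 : v ≤ 1)
    (hr0 : 0 ≤ r) (hr1 : r ≤ 1) :
    ((1 - v) + v * t⁻¹)⁻¹ ≤ v * (t - 1) * (r * ((1 + t) / 2) ^ (v - 1) + (1 - r)) + 1 := by
  have ht0 : (0:ℝ) < t := by linarith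
  set D : ℝ := (1 - v) * t + v with hDdef
  have hD1 : 1 ≤ D := by nlinarith
  have hD0 : 0 < D := by linarith
  -- geometric mean inequality: t^(1-v) * 1^v ≤ (1-v)*t + v
  have hgm : t ^ (1 - v) * (1:ℝ) ^ v ≤ D := by
    have := Real.geom_mean_le_arith_mean2_weighted (by linarith : (0:ℝ) ≤ 1 - v) hv0
      ht0.le zero_le_one (by ring)
    simpa using this
  have hmid : (0:ℝ) < (1 + t) / 2 := by linarith
  have hkey : ((1 + t) / 2) ^ (1 - v) ≤ D := by
    calc ((1 + t) / 2) ^ (1 - v) ≤ t ^ (1 - v) :=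
          Real.rpow_le_rpow hmid.le (by linarith) (by linarith)
      _ ≤ D := by simpa using hgm
  have hx : D⁻¹ ≤ ((1 + t) / 2) ^ (v - 1) := by
    have h1 : ((1 + t) / 2) ^ (v - 1) = (((1 + t) / 2) ^ (1 - v))⁻¹ := by
      rw [← Real.rpow_neg hmid.le]; ring_nf
    rw [h1]
    exact inv_anti₀ (by positivity) hkey
  have hA : ((1 - v) + v * t⁻¹) = D / t := by
    field_simp [hDdef]
    exact hDdef.symm
  rw [hA, inv_div]
  have hDinv1 : D⁻¹ ≤ 1 := by
    rw [inv_le_one_iff₀]; right; exact hD1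
  have hvt : 0 ≤ v * (t - 1) := by nlinarith
  have hstep : D⁻¹ ≤ r * ((1 + t) / 2) ^ (v - 1) + (1 - r) := by nlinarith
  have : t / D = v * (t - 1) * D⁻¹ + 1 := by field_simp; ring
  rw [this]
  nlinarith [mul_le_mul_of_nonneg_left hstep hvt]
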